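/- Fix 0<q<1 and α>−1. Then for every integer n≥0: Σ_{j=0}^{n} π̃_j^{(α)} = (q^{α+2};q)_n (1−γ(1,α+1;q)) / ( (q;q)_n (1−γ(n+1,α+1;q)) ). -/

import Mathlib

open Finset

/-- The finite q-Pochhammer symbol `(a;q)_n = ∏_{k=0}^{n−1} (1 − a q^k)`. -/
noncomputable def qPochN (q a : ℝ) (n : ℕ) : ℝ :=
  ∏ k ∈ Finset.range n, (1 - a * q ^ k)

/-- The infinite q-Pochhammer symbol `(a;q)_∞ = ∏_{k=0}^∞ (1 − a q^k)`. -/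
noncomputable def qPochInf (q a : ℝ) : ℝ :=
  ∏' k : ℕ, (1 - a * q ^ k)

/-- `γ(u,v;q) = (q^u;q)_∞/(q^{u+v};q)_∞`. -/
noncomputable def qgamma (q u v : ℝ) : ℝ :=
  qPochInf q (q ^ u) / qPochInf q (q ^ (u + v))

/-- `r_n^{(α)} = (1−γ(n+1,α+1;q))/(1−γ(n,α+1;q))`. -/
noncomputable def rQL (q α : ℝ) (n : ℕ) : ℝ :=
  (1 - qgamma q ((n : ℝ) + 1) (α + 1)) / (1 - qgamma q (n : ℝ) (α + 1))

/-- The birth rates `λ̃_n^{(α)} = q^{−2n−α−1}(1−q^{n+α+1})/r_n^{(α)}`. -/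
noncomputable def lamQL (q α : ℝ) (n : ℕ) : ℝ :=
  q ^ (-(2 * (n : ℝ)) - α - 1) * (1 - q ^ ((n : ℝ) + α + 1)) / rQL q α n

/-- The death rates `μ̃_n^{(α)} = q^{−2n−α}(1−q^n) r_n^{(α)}`. -/
noncomputable def muQL (q α : ℝ) (n : ℕ) : ℝ :=
  q ^ (-(2 * (n : ℝ)) - α) * (1 - q ^ (n : ℝ)) * rQL q α n

/-- `π̃_n^{(α)} = ∏_{k=0}^{n−1} λ̃_k^{(α)}/μ̃_{k+1}^{(α)}` (with `π̃_0 = 1`). -/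
noncomputable def piQL (q α : ℝ) (n : ℕ) : ℝ :=
  ∏ k ∈ Finset.range n, lamQL q α k / muQL q α (k + 1)

/-- `T̃_k^{(α)} = Σ_{j=0}^{k} π̃_j^{(α)}`. -/
noncomputable def TQL (q α : ℝ) (k : ℕ) : ℝ :=
  ∑ j ∈ Finset.range (k + 1), piQL q α j

/-- The descending q-Pochhammer symbol `(q^k;q^{−1})_ℓ = ∏_{i=0}^{ℓ−1}(1−q^{k−i})`. -/
noncomputable def qPochDesc (q : ℝ) (k ℓ : ℕ) : ℝ :=
  ∏ i ∈ Finset.range ℓ, (1 - q ^ ((k : ℝ) - (i : ℝ)))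

set_option linter.unusedSectionVars false

section
variable {q : ℝ} (hq0 : 0 < q) (hq1 : q < 1)
include hq0 hq1

lemma qlag_lt_one {x : ℝ} (hx : 0 < x) : q ^ x < 1 := Real.rpow_lt_one hq0.le hq1 hx

lemma qlag_fac_pos {x : ℝ} (hx : 0 < x) : 0 < 1 - q ^ x := by
  have := qlag_lt_one hq0 hq1 hx; linarith

lemma qlag_summable {u : ℝ} (hu : 0 < u) :
    Summable fun k : ℕ => Real.log (1 - q ^ (u + (k : ℝ))) := by
  have hqu1 : q ^ u < 1 := qlag_lt_one hq0 hq1 hu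
  have hx : ∀ k : ℕ, 0 < q ^ (u + (k : ℝ)) ∧ q ^ (u + (k : ℝ)) ≤ q ^ u := by
    intro k
    refine ⟨Real.rpow_pos_of_pos hq0 _, ?_⟩
    apply Real.rpow_le_rpow_of_exponent_ge hq0 hq1.le
    have : (0:ℝ) ≤ (k:ℝ) := Nat.cast_nonneg k
    linarith
  rw [← summable_abs_iff]
  have hgeo : Summable fun k : ℕ => (q ^ u / (1 - q ^ u)) * q ^ k :=
    (summable_geometric_of_lt_one hq0.le hq1).mul_left _
  refine hgeo.of_nonneg_of_le (fun k => abs_nonneg _) (fun k => ?_)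
  obtain ⟨h1, h2⟩ := hx k
  have hpos : 0 < 1 - q ^ (u + (k : ℝ)) := by linarith
  have hlogneg : Real.log (1 - q ^ (u + (k : ℝ))) ≤ 0 := by
    apply Real.log_nonpos (by linarith) (by linarith)
  rw [abs_of_nonpos hlogneg]
  have hinv : Real.log ((1 - q ^ (u + (k : ℝ)))⁻¹) ≤ (1 - q ^ (u + (k : ℝ)))⁻¹ - 1 :=
    Real.log_le_sub_one_of_pos (by positivity)
  rw [Real.log_inv] at hinv
  have he : (1 - q ^ (u + (k : ℝ)))⁻¹ - 1 = q ^ (u + (k : ℝ)) / (1 - q ^ (u + (k : ℝ))) := by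
    field_simp
    ring
  rw [he] at hinv
  refine hinv.trans ?_
  have hq' : q ^ (u + (k : ℝ)) = q ^ u * q ^ k := by
    rw [Real.rpow_add hq0, Real.rpow_natCast]
  rw [hq'] at hpos ⊢
  have h3 : q ^ u / (1 - q ^ u) * q ^ k = q ^ u * q ^ k / (1 - q ^ u) := by ring
  rw [h3]
  have hb : (0:ℝ) < 1 - q ^ u := by linarith
  have hbc : 1 - q ^ u ≤ 1 - q ^ u * q ^ k := by
    have h4 : q ^ k ≤ 1 := pow_le_one₀ hq0.le hq1.le
    nlinarith [Real.rpow_pos_of_pos hq0 u]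
  exact div_le_div_of_nonneg_left (by positivity) hb hbc

lemma qlag_pochinf_eq {u : ℝ} (hu : 0 < u) :
    qPochInf q (q ^ u) = Real.exp (∑' k : ℕ, Real.log (1 - q ^ (u + (k : ℝ)))) := by
  have hpos : ∀ k : ℕ, 0 < 1 - q ^ (u + (k : ℝ)) := fun k =>
    qlag_fac_pos hq0 hq1 (by positivity)
  have hs := (qlag_summable hq0 hq1 hu).hasSum
  have hp := hs.rexp
  have hp2 : HasProd (fun k : ℕ => 1 - q ^ (u + (k : ℝ)))
      (Real.exp (∑' k : ℕ, Real.log (1 - q ^ (u + (k : ℝ))))) := by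
    refine hp.congr_fun fun k => ?_
    exact (Real.exp_log (hpos k)).symm
  have : qPochInf q (q ^ u) = ∏' k : ℕ, (1 - q ^ (u + (k : ℝ))) := by
    unfold qPochInf
    congr 1
    ext k
    rw [Real.rpow_add hq0, Real.rpow_natCast]
  rw [this, hp2.tprod_eq]

end

section
variable {q : ℝ} (hq0 : 0 < q) (hq1 : q < 1)
include hq0 hq1

lemma qlag_pochinf_pos {u : ℝ} (hu : 0 < u) : 0 < qPochInf q (q ^ u) := by
  rw [qlag_pochinf_eq hq0 hq1 hu]; exact Real.exp_pos _

set_option maxHeartbeats 1000000 in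
lemma qlag_pochinf_shift {u : ℝ} (hu : 0 < u) :
    qPochInf q (q ^ u) = (1 - q ^ u) * qPochInf q (q ^ (u + 1)) := by
  rw [qlag_pochinf_eq hq0 hq1 hu, qlag_pochinf_eq hq0 hq1 (by linarith : (0:ℝ) < u + 1)]
  rw [Summable.tsum_eq_zero_add (qlag_summable hq0 hq1 hu)]
  rw [Real.exp_add]
  congr 1
  · rw [show u + ((0:ℕ):ℝ) = u by push_cast; ring]
    exact Real.exp_log (qlag_fac_pos hq0 hq1 hu)
  · congr 1
    apply tsum_congr
    intro k
    congr 2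
    push_cast
    ring

lemma qlag_pochinf_lt {u v : ℝ} (hu : 0 < u) (huv : u < v) :
    qPochInf q (q ^ u) < qPochInf q (q ^ v) := by
  have hv : 0 < v := lt_trans hu huv
  rw [qlag_pochinf_eq hq0 hq1 hu, qlag_pochinf_eq hq0 hq1 hv]
  rw [Real.exp_lt_exp]
  have hle : ∀ k : ℕ, Real.log (1 - q ^ (u + (k:ℝ))) ≤ Real.log (1 - q ^ (v + (k:ℝ))) := by
    intro k
    apply Real.log_le_log (qlag_fac_pos hq0 hq1 (by positivity))
    have : q ^ (v + (k:ℝ)) ≤ q ^ (u + (k:ℝ)) :=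
      Real.rpow_le_rpow_of_exponent_ge hq0 hq1.le (by linarith)
    linarith
  refine Summable.tsum_lt_tsum (i := 0) hle ?_ (qlag_summable hq0 hq1 hu) (qlag_summable hq0 hq1 hv)
  apply Real.log_lt_log (qlag_fac_pos hq0 hq1 (by positivity))
  have : q ^ (v + ((0:ℕ):ℝ)) < q ^ (u + ((0:ℕ):ℝ)) :=
    Real.rpow_lt_rpow_of_exponent_gt hq0 hq1 (by push_cast; linarith)
  linarith

end

section
variable {q α : ℝ} (hq0 : 0 < q) (hq1 : q < 1) (hα : -1 < α)
include hq0 hq1 hα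

lemma qlag_gamma_zero : qgamma q 0 (α + 1) = 0 := by
  have h0 : qPochInf q (q ^ (0:ℝ)) = 0 := by
    unfold qPochInf
    have hp : HasProd (fun k : ℕ => 1 - q ^ (0:ℝ) * q ^ k) 0 := by
      rw [HasProd]
      refine Filter.Tendsto.congr' ?_ tendsto_const_nhds
      filter_upwards [Filter.eventually_ge_atTop ({0} : Finset ℕ)] with s hs
      refine (Finset.prod_eq_zero (hs (Finset.mem_singleton_self 0)) ?_).symm
      simp [Real.rpow_zero]
    exact hp.tprod_eq
  unfold qgamma
  rw [h0, zero_div]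

lemma qlag_gamma_mem {u : ℝ} (hu : 0 < u) :
    0 < qgamma q u (α + 1) ∧ qgamma q u (α + 1) < 1 := by
  have huv : 0 < u + (α + 1) := by linarith
  have h1 := qlag_pochinf_pos hq0 hq1 hu
  have h2 := qlag_pochinf_pos hq0 hq1 huv
  have h3 := qlag_pochinf_lt hq0 hq1 hu (show u < u + (α+1) by linarith)
  constructor
  · exact div_pos h1 h2
  · unfold qgamma; rw [div_lt_one h2]; exact h3

lemma qlag_one_sub_gamma_pos {u : ℝ} (hu : 0 < u) : 0 < 1 - qgamma q u (α + 1) := by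
  have := (qlag_gamma_mem hq0 hq1 hα hu).2; linarith

lemma qlag_one_sub_gamma_ne (m : ℕ) : 1 - qgamma q (m:ℝ) (α + 1) ≠ 0 := by
  rcases Nat.eq_zero_or_pos m with h | h
  · subst h; rw [Nat.cast_zero, qlag_gamma_zero hq0 hq1 hα]; norm_num
  · have : (0:ℝ) < (m:ℝ) := by exact_mod_cast h
    exact (qlag_one_sub_gamma_pos hq0 hq1 hα this).ne'

/-- Key identity: `(1 - q^(x+α+1)) γ(x) = (1 - q^x) γ(x+1)` for `x = m : ℕ`. -/
lemma qlag_key (m : ℕ) :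
    (1 - q ^ ((m:ℝ) + α + 1)) * qgamma q (m:ℝ) (α + 1)
      = (1 - q ^ (m:ℝ)) * qgamma q ((m:ℝ) + 1) (α + 1) := by
  rcases Nat.eq_zero_or_pos m with h | h
  · subst h
    rw [Nat.cast_zero, qlag_gamma_zero hq0 hq1 hα, Real.rpow_zero]
    ring
  · have hm : (0:ℝ) < (m:ℝ) := by exact_mod_cast h
    have hma : (0:ℝ) < (m:ℝ) + α + 1 := by linarith
    unfold qgamma
    rw [qlag_pochinf_shift hq0 hq1 hm]
    rw [show (m:ℝ) + (α + 1) = ((m:ℝ) + α + 1) by ring]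
    rw [qlag_pochinf_shift hq0 hq1 hma]
    rw [show (m:ℝ) + 1 + (α + 1) = ((m:ℝ) + α + 1) + 1 by ring]
    have hP1 := (qlag_pochinf_pos hq0 hq1 (show (0:ℝ) < (m:ℝ)+1 by linarith)).ne'
    have hP2 := (qlag_pochinf_pos hq0 hq1 (show (0:ℝ) < ((m:ℝ)+α+1)+1 by linarith)).ne'
    have hfac := (qlag_fac_pos hq0 hq1 hma).ne'
    field_simp

end

section
variable {q α : ℝ} (hq0 : 0 < q) (hq1 : q < 1) (hα : -1 < α)
include hq0 hq1 hα

lemma qlag_ratio (m : ℕ) :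
    lamQL q α m / muQL q α (m + 1)
      = q * (1 - q ^ ((m:ℝ) + α + 1)) * (1 - qgamma q (m:ℝ) (α + 1))
        / ((1 - q ^ ((m:ℝ) + 1)) * (1 - qgamma q ((m:ℝ) + 2) (α + 1))) := by
  have c1 : ((m + 1 : ℕ) : ℝ) = (m:ℝ) + 1 := by push_cast; ring
  have hg0 := qlag_one_sub_gamma_ne hq0 hq1 hα m
  have hg1 := qlag_one_sub_gamma_ne hq0 hq1 hα (m + 1)
  have hg2 := qlag_one_sub_gamma_ne hq0 hq1 hα (m + 2)
  rw [c1] at hg1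
  have c2 : ((m + 2 : ℕ) : ℝ) = (m:ℝ) + 2 := by push_cast; ring
  rw [c2] at hg2
  have hE2 : q ^ (-(2 * ((m:ℝ) + 1)) - α) ≠ 0 := (Real.rpow_pos_of_pos hq0 _).ne'
  have hf1 : (1 - q ^ ((m:ℝ) + 1)) ≠ 0 :=
    (qlag_fac_pos hq0 hq1 (by positivity : (0:ℝ) < (m:ℝ) + 1)).ne'
  have hE12 : q ^ (-(2 * (m:ℝ)) - α - 1) = q * q ^ (-(2 * ((m:ℝ) + 1)) - α) := by
    rw [show -(2 * (m:ℝ)) - α - 1 = 1 + (-(2 * ((m:ℝ) + 1)) - α) by ring,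
      Real.rpow_add hq0, Real.rpow_one]
  unfold lamQL muQL rQL
  rw [c1, hE12]
  rw [show (m:ℝ) + 1 + 1 = (m:ℝ) + 2 by ring]
  field_simp

set_option maxHeartbeats 2000000 in
lemma qlag_pi_closed (m : ℕ) :
    piQL q α m
      = q ^ (m:ℝ) * (∏ k ∈ Finset.range m, (1 - q ^ ((k:ℝ) + α + 1)))
            * (1 - qgamma q 1 (α + 1))
        / ((∏ k ∈ Finset.range m, (1 - q ^ ((k:ℝ) + 1)))
            * (1 - qgamma q (m:ℝ) (α + 1)) * (1 - qgamma q ((m:ℝ) + 1) (α + 1))) := by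
  induction m with
  | zero =>
      have hg1 : (1 - qgamma q 1 (α + 1)) ≠ 0 := by
        have := qlag_one_sub_gamma_ne hq0 hq1 hα 1
        rwa [Nat.cast_one] at this
      simp [piQL, qlag_gamma_zero hq0 hq1 hα, hg1]
  | succ m ih =>
      have c1 : ((m + 1 : ℕ) : ℝ) = (m:ℝ) + 1 := by push_cast; ring
      have hg0 := qlag_one_sub_gamma_ne hq0 hq1 hα m
      have hg1 := qlag_one_sub_gamma_ne hq0 hq1 hα (m + 1)
      rw [c1] at hg1
      have hg2 := qlag_one_sub_gamma_ne hq0 hq1 hα (m + 2)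
      have c2 : ((m + 2 : ℕ) : ℝ) = (m:ℝ) + 2 := by push_cast; ring
      rw [c2] at hg2
      have hBpos : (0:ℝ) < ∏ k ∈ Finset.range m, (1 - q ^ ((k:ℝ) + 1)) :=
        Finset.prod_pos fun k _ => qlag_fac_pos hq0 hq1 (by positivity)
      have hApos : (0:ℝ) < ∏ k ∈ Finset.range m, (1 - q ^ ((k:ℝ) + α + 1)) :=
        Finset.prod_pos fun k _ => qlag_fac_pos hq0 hq1
          (by have := Nat.cast_nonneg (α := ℝ) k; linarith)
      have hf1 : (1 - q ^ ((m:ℝ) + 1)) ≠ 0 :=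
        (qlag_fac_pos hq0 hq1 (by positivity : (0:ℝ) < (m:ℝ) + 1)).ne'
      have hqpow : q ^ ((m:ℝ) + 1) = q ^ (m:ℝ) * q := Real.rpow_add_one hq0.ne' _
      rw [piQL, Finset.prod_range_succ, ← piQL, ih, qlag_ratio hq0 hq1 hα m]
      rw [Finset.prod_range_succ, Finset.prod_range_succ, c1]
      rw [show (m:ℝ) + 1 + 1 = (m:ℝ) + 2 by ring, hqpow]
      rw [hqpow] at hf1
      set A := ∏ k ∈ Finset.range m, (1 - q ^ ((k:ℝ) + α + 1)) with hA
      set B := ∏ k ∈ Finset.range m, (1 - q ^ ((k:ℝ) + 1)) with hB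
      set G0 := qgamma q (m:ℝ) (α + 1) with hG0
      set G1 := qgamma q ((m:ℝ) + 1) (α + 1) with hG1
      set G2 := qgamma q ((m:ℝ) + 2) (α + 1) with hG2
      set Gq := qgamma q 1 (α + 1) with hGq
      set X := q ^ (m:ℝ) with hX
      set Y := q ^ ((m:ℝ) + α + 1) with hY
      have hAne : A ≠ 0 := hApos.ne'
      have hBne : B ≠ 0 := hBpos.ne'
      field_simp
end

section
variable {q α : ℝ} (hq0 : 0 < q) (hq1 : q < 1) (hα : -1 < α)
include hq0 hq1 hα

lemma qlag_pochN_q (n : ℕ) :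
    qPochN q q n = ∏ k ∈ Finset.range n, (1 - q ^ ((k:ℝ) + 1)) := by
  refine Finset.prod_congr rfl fun k _ => ?_
  rw [Real.rpow_add_one hq0.ne', Real.rpow_natCast]
  ring

lemma qlag_pochN_a (n : ℕ) :
    qPochN q (q ^ (α + 2)) n = ∏ k ∈ Finset.range n, (1 - q ^ ((k:ℝ) + α + 2)) := by
  refine Finset.prod_congr rfl fun k _ => ?_
  rw [← Real.rpow_natCast q k, ← Real.rpow_add hq0]
  rw [show α + 2 + (k:ℝ) = (k:ℝ) + α + 2 by ring]

lemma qlag_A_succ (n : ℕ) :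
    (∏ k ∈ Finset.range (n + 1), (1 - q ^ ((k:ℝ) + α + 1)))
      = (1 - q ^ (α + 1)) * ∏ k ∈ Finset.range n, (1 - q ^ ((k:ℝ) + α + 2)) := by
  rw [Finset.prod_range_succ']
  rw [show ((0:ℕ):ℝ) + α + 1 = α + 1 by push_cast; ring]
  rw [mul_comm]
  congr 1
  refine Finset.prod_congr rfl fun k _ => ?_
  congr 1
  push_cast
  ring

theorem modified_qLaguerre_partial_sum_pi' (n : ℕ) :
    ∑ j ∈ Finset.range (n + 1), piQL q α j
      = qPochN q (q ^ (α + 2)) n * (1 - qgamma q 1 (α + 1))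
        / (qPochN q q n * (1 - qgamma q ((n : ℝ) + 1) (α + 1))) := by
  induction n with
  | zero =>
      have hg1 : (1 - qgamma q 1 (α + 1)) ≠ 0 := by
        have := qlag_one_sub_gamma_ne hq0 hq1 hα 1
        rwa [Nat.cast_one] at this
      simp [piQL, qPochN]
      rw [div_self hg1]
  | succ n ih =>
      rw [Finset.sum_range_succ, ih, qlag_pi_closed hq0 hq1 hα (n + 1)]
      rw [qlag_pochN_q hq0 hq1 hα, qlag_pochN_q hq0 hq1 hα,
        qlag_pochN_a hq0 hq1 hα, qlag_pochN_a hq0 hq1 hα]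
      have c1 : ((n + 1 : ℕ) : ℝ) = (n:ℝ) + 1 := by push_cast; ring
      rw [c1, qlag_A_succ hq0 hq1 hα]
      rw [show (n:ℝ) + 1 + 1 = (n:ℝ) + 2 by ring]
      rw [Finset.prod_range_succ, Finset.prod_range_succ]
      -- key identity at n+1
      have hkey := qlag_key hq0 hq1 hα (n + 1)
      rw [c1] at hkey
      rw [show (n:ℝ) + 1 + α + 1 = (n:ℝ) + α + 2 by ring,
        show (n:ℝ) + 1 + 1 = (n:ℝ) + 2 by ring] at hkey
      -- nonzero facts
      have hg1 := qlag_one_sub_gamma_ne hq0 hq1 hα (n + 1)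
      rw [c1] at hg1
      have hg2 := qlag_one_sub_gamma_ne hq0 hq1 hα (n + 2)
      have c2 : ((n + 2 : ℕ) : ℝ) = (n:ℝ) + 2 := by push_cast; ring
      rw [c2] at hg2
      have hgq : (1 - qgamma q 1 (α + 1)) ≠ 0 := by
        have := qlag_one_sub_gamma_ne hq0 hq1 hα 1
        rwa [Nat.cast_one] at this
      have hBpos : (0:ℝ) < ∏ k ∈ Finset.range n, (1 - q ^ ((k:ℝ) + 1)) :=
        Finset.prod_pos fun k _ => qlag_fac_pos hq0 hq1 (by positivity)
      have hf1 : (1 - q ^ ((n:ℝ) + 1)) ≠ 0 :=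
        (qlag_fac_pos hq0 hq1 (by positivity : (0:ℝ) < (n:ℝ) + 1)).ne'
      have hx : q ^ ((n:ℝ) + 1) * q ^ (α + 1) = q ^ ((n:ℝ) + α + 2) := by
        rw [← Real.rpow_add hq0]
        rw [show (n:ℝ) + 1 + (α + 1) = (n:ℝ) + α + 2 by ring]
      set B := ∏ k ∈ Finset.range n, (1 - q ^ ((k:ℝ) + 1)) with hB
      set C := ∏ k ∈ Finset.range n, (1 - q ^ ((k:ℝ) + α + 2)) with hC
      set G1 := qgamma q ((n:ℝ) + 1) (α + 1) with hG1
      set G2 := qgamma q ((n:ℝ) + 2) (α + 1) with hG2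
      set Gq := qgamma q 1 (α + 1) with hGq
      set X1 := q ^ ((n:ℝ) + 1) with hX1
      set X2 := q ^ ((n:ℝ) + α + 2) with hX2
      set Xa := q ^ (α + 1) with hXa
      have hBne : B ≠ 0 := hBpos.ne'
      have hstep : (1 - X2) * (1 - G1) = (1 - X1) * (1 - G2) + X1 * (1 - Xa) := by
        linear_combination (-1 : ℝ) * hkey + hx
      have hf1' : (1 - X1) ≠ 0 := hf1
      have hD1 : B * (1 - G1) ≠ 0 := mul_ne_zero hBne hg1
      have hD2 : B * (1 - X1) * (1 - G1) * (1 - G2) ≠ 0 :=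
        mul_ne_zero (mul_ne_zero (mul_ne_zero hBne hf1') hg1) hg2
      have hDR : B * (1 - X1) * (1 - G2) ≠ 0 :=
        mul_ne_zero (mul_ne_zero hBne hf1') hg2
      rw [div_add_div _ _ hD1 hD2, div_eq_div_iff (mul_ne_zero hD1 hD2) hDR]
      linear_combination (-(B^2 * (1 - X1) * (1 - G1) * (1 - G2) * C * (1 - Gq))) * hstep

end

/-- Lemma 6.10: `Σ_{j=0}^{n} π̃_j^{(α)}
  = (q^{α+2};q)_n (1−γ(1,α+1;q)) / ((q;q)_n (1−γ(n+1,α+1;q)))`. -/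
theorem modified_qLaguerre_partial_sum_pi
    (q α : ℝ) (hq0 : 0 < q) (hq1 : q < 1) (hα : -1 < α) (n : ℕ) :
    ∑ j ∈ Finset.range (n + 1), piQL q α j
      = qPochN q (q ^ (α + 2)) n * (1 - qgamma q 1 (α + 1))
        / (qPochN q q n * (1 - qgamma q ((n : ℝ) + 1) (α + 1))) :=
  modified_qLaguerre_partial_sum_pi' hq0 hq1 hα n
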